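/- Let G be a finite group, let p be the smallest prime divisor of |G|, and let g ∈ G. Let C be a one-product free sequence all of whose terms lie in the cyclic subgroup ⟨g⟩, and let D be a sequence of length p − 1 all of whose terms lie in G \ ⟨g⟩. Then |Π(C·D)| ≥ p·|C|. -/

import Mathlib

/-- The set `Π(S)` of all products of nonempty subsequences of the sequence
(multiset) `S` over `G`, where the terms of a subsequence may be taken in any order. -/
def subseqProds {G : Type*} [Group G] (S : Multiset G) : Set G :=
  {x | ∃ l : List G, l ≠ [] ∧ (l : Multiset G) ≤ S ∧ l.prod = x}

/-- A sequence `S` over `G` is one-product free if `1 ∉ Π(S)`. -/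
def OneProdFree {G : Type*} [Group G] (S : Multiset G) : Prop :=
  (1 : G) ∉ subseqProds S

lemma oneProdFree_cons {G : Type*} [Group G] {S : Multiset G} {a : G}
    (h : OneProdFree (a ::ₘ S)) : OneProdFree S := by
  rintro ⟨l, hne, hle, hprod⟩
  exact h ⟨l, hne, hle.trans (Multiset.le_cons_self S a), hprod⟩

lemma card_le_ncard_subseqProds {G : Type*} [Group G] [Fintype G] (S : Multiset G)
    (hS : OneProdFree S) : Multiset.card S ≤ (subseqProds S).ncard := by
  induction S using Multiset.induction_on with
  | empty => simp
  | cons a S ih =>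
    have hS' : OneProdFree S := oneProdFree_cons hS
    have hsub : (fun x => x * a) '' (insert 1 (subseqProds S)) ⊆ subseqProds (a ::ₘ S) := by
      rintro y ⟨x, hx, rfl⟩
      rcases hx with rfl | ⟨l, hne, hle, rfl⟩
      · refine ⟨[a], by simp, ?_, by simp⟩
        simpa using Multiset.singleton_le.2 (Multiset.mem_cons_self a S)
      · refine ⟨l ++ [a], by simp, ?_, by simp⟩
        have h1 : ((l ++ [a] : List G) : Multiset G) = (l : Multiset G) + {a} := rfl
        rw [h1]
        have h2 : (l : Multiset G) + {a} ≤ S + {a} := add_le_add hle le_rfl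
        refine h2.trans ?_
        rw [show S + {a} = a ::ₘ S by rw [add_comm, Multiset.singleton_add]]
    have h1 : (1 : G) ∉ subseqProds S := hS'
    calc Multiset.card (a ::ₘ S) = Multiset.card S + 1 := by simp
      _ ≤ (subseqProds S).ncard + 1 := by have := ih hS'; omega
      _ = (insert 1 (subseqProds S)).ncard := by
          rw [Set.ncard_insert_of_notMem h1 (Set.toFinite _)]
      _ = ((fun x => x * a) '' (insert 1 (subseqProds S))).ncard := by
          rw [Set.ncard_image_of_injective _ (mul_left_injective a)]
      _ ≤ (subseqProds (a ::ₘ S)).ncard := Set.ncard_le_ncard hsub (Set.toFinite _)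

lemma coset_lemma {G : Type*} [Group G] [Fintype G] (p : ℕ)
    (hmin : ∀ q : ℕ, q.Prime → q ∣ Fintype.card G → p ≤ q)
    (K : Subgroup G) (L : List G) (hL : ∀ d ∈ L, d ∉ K) :
    ∃ T : Finset G, (1 : G) ∈ T ∧
      (∀ w ∈ T, ∃ l : List G, (l : Multiset G) ≤ (L : Multiset G) ∧ l.prod = w) ∧
      Set.InjOn (QuotientGroup.mk (s := K)) ↑T ∧
      min (L.length + 1) p ≤ T.card := by
  classical
  induction L with
  | nil =>
    refine ⟨{1}, by simp, ?_, ?_, ?_⟩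
    · intro w hw
      simp only [Finset.mem_singleton] at hw
      exact ⟨[], le_rfl, by simp [hw]⟩
    · intro a ha b hb _
      simp only [Finset.coe_singleton, Set.mem_singleton_iff] at ha hb
      rw [ha, hb]
    · simp only [List.length_nil, Finset.card_singleton]
      omega
  | cons d L ih =>
    obtain ⟨T, hT1, hTprod, hTinj, hTcard⟩ := ih (fun x hx => hL x (List.mem_cons_of_mem d hx))
    have hd : d ∉ K := hL d List.mem_cons_self
    have hTprod' : ∀ w ∈ T, ∃ l : List G,
        (l : Multiset G) ≤ ((d :: L : List G) : Multiset G) ∧ l.prod = w := by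
      intro w hw
      obtain ⟨l, hle, hpr⟩ := hTprod w hw
      exact ⟨l, hle.trans (by simpa using Multiset.le_cons_self (L : Multiset G) d), hpr⟩
    by_cases hA : ∃ w ∈ T, (QuotientGroup.mk (d * w) : G ⧸ K) ∉
        T.image (QuotientGroup.mk (s := K))
    · obtain ⟨w₀, hw₀, hnew⟩ := hA
      have hnotmem : d * w₀ ∉ T := fun hmem => hnew (Finset.mem_image_of_mem _ hmem)
      refine ⟨insert (d * w₀) T, Finset.mem_insert_of_mem hT1, ?_, ?_, ?_⟩
      · intro w hw
        rcases Finset.mem_insert.1 hw with rfl | hw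
        · obtain ⟨l, hle, hpr⟩ := hTprod w₀ hw₀
          refine ⟨d :: l, ?_, by simp [hpr]⟩
          simpa using Multiset.cons_le_cons d hle
        · exact hTprod' w hw
      · intro a ha b hb hab
        simp only [Finset.coe_insert, Set.mem_insert_iff, Finset.mem_coe] at ha hb
        rcases ha with rfl | ha
        · rcases hb with rfl | hb
          · rfl
          · exact absurd (hab ▸ Finset.mem_image_of_mem _ hb) hnew
        · rcases hb with rfl | hb
          · exact absurd (hab ▸ Finset.mem_image_of_mem _ ha) hnew
          · exact hTinj ha hb hab
      · rw [Finset.card_insert_of_notMem hnotmem]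
        simp only [List.length_cons]
        omega
    · push_neg at hA
      -- every translate stays inside; derive p ≤ T.card
      have hex : ∃ m, 0 < m ∧ d ^ m ∈ K :=
        ⟨orderOf d, orderOf_pos d, by rw [pow_orderOf_eq_one]; exact K.one_mem⟩
      set m := Nat.find hex with hm_def
      obtain ⟨hm0, hmK⟩ := Nat.find_spec hex
      rw [← hm_def] at hm0 hmK
      have hm1 : m ≠ 1 := by
        intro h
        rw [h, pow_one] at hmK
        exact hd hmK
      have hmdvd : m ∣ orderOf d := by
        have ht : orderOf d % m < m := Nat.mod_lt _ hm0
        have hmem : d ^ (orderOf d % m) ∈ K := by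
          have h2 : d ^ (m * (orderOf d / m)) * d ^ (orderOf d % m) = 1 := by
            rw [← pow_add, Nat.div_add_mod, pow_orderOf_eq_one]
          have h3 : d ^ (orderOf d % m) = (d ^ (m * (orderOf d / m)))⁻¹ * 1 := by
            rw [← h2]; group
          rw [h3, mul_one, pow_mul]
          exact K.inv_mem (K.pow_mem hmK _)
        have hmin' := Nat.find_min hex ht
        have hr : orderOf d % m = 0 := by
          by_contra hr0
          exact hmin' ⟨Nat.pos_of_ne_zero hr0, hmem⟩
        exact Nat.dvd_of_mod_eq_zero hr
      have hpm : p ≤ m := by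
        have hq := Nat.minFac_prime hm1
        have hqG : m.minFac ∣ Fintype.card G :=
          ((Nat.minFac_dvd m).trans hmdvd).trans orderOf_dvd_card
        exact (hmin _ hq hqG).trans (Nat.minFac_le hm0)
      have hchain : ∀ i : ℕ, (QuotientGroup.mk (d ^ i) : G ⧸ K) ∈
          T.image (QuotientGroup.mk (s := K)) := by
        intro i
        induction i with
        | zero =>
          rw [pow_zero]
          exact Finset.mem_image_of_mem _ hT1
        | succ i ihc =>
          obtain ⟨w, hw, hwe⟩ := Finset.mem_image.1 ihc
          have : (QuotientGroup.mk (d * w) : G ⧸ K) = QuotientGroup.mk (d ^ (i + 1)) := by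
            rw [QuotientGroup.eq] at hwe ⊢
            rw [pow_succ']
            simpa [mul_assoc] using hwe
          rw [← this]
          exact hA w hw
      have hinj : Set.InjOn (fun i => (QuotientGroup.mk (d ^ i) : G ⧸ K))
          ↑(Finset.range m) := by
        have key : ∀ i j : ℕ, i < j → j < m →
            (QuotientGroup.mk (d ^ i) : G ⧸ K) ≠ QuotientGroup.mk (d ^ j) := by
          intro i j hij hjm heq
          rw [QuotientGroup.eq] at heq
          obtain ⟨k, hk0, rfl⟩ : ∃ k, 0 < k ∧ j = i + k := ⟨j - i, by omega, by omega⟩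
          rw [pow_add, inv_mul_cancel_left] at heq
          exact Nat.find_min hex (show k < m by omega) ⟨hk0, heq⟩
        intro i hi j hj hij
        simp only [Finset.coe_range, Set.mem_Iio] at hi hj
        by_contra hne
        rcases Nat.lt_or_ge i j with h | h
        · exact key i j h hj hij
        · exact key j i (by omega) hi hij.symm
      have hcard : m ≤ T.card := by
        have h1 : ((Finset.range m).image fun i => (QuotientGroup.mk (d ^ i) : G ⧸ K)) ⊆
            T.image (QuotientGroup.mk (s := K)) := by
          intro x hx
          obtain ⟨i, _, rfl⟩ := Finset.mem_image.1 hx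
          exact hchain i
        calc m = ((Finset.range m).image
              fun i => (QuotientGroup.mk (d ^ i) : G ⧸ K)).card := by
              rw [Finset.card_image_of_injOn hinj, Finset.card_range]
          _ ≤ (T.image (QuotientGroup.mk (s := K))).card := Finset.card_le_card h1
          _ ≤ T.card := Finset.card_image_le
      exact ⟨T, hT1, hTprod', hTinj, by omega⟩

/-- Let `G` be a finite group, `p` the smallest prime divisor of `|G|`, and `g ∈ G`.
Let `C` be a one-product free sequence with all terms in `⟨g⟩` and let `D` be a
sequence of length `p - 1` with all terms in `G \ ⟨g⟩`. Then `|Π(C·D)| ≥ p * |C|`. -/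
theorem mul_card_le_card_subseqProds {G : Type*} [Group G] [Fintype G]
    (p : ℕ) (hp : p.Prime) (hpn : p ∣ Fintype.card G)
    (hmin : ∀ q : ℕ, q.Prime → q ∣ Fintype.card G → p ≤ q)
    (g : G) (C D : Multiset G) (hC : OneProdFree C)
    (hCg : ∀ x ∈ C, x ∈ Subgroup.zpowers g)
    (hD : Multiset.card D = p - 1) (hDg : ∀ x ∈ D, x ∉ Subgroup.zpowers g) :
    p * Multiset.card C ≤ (subseqProds (C + D)).ncard := by
  classical
  set K : Subgroup G := Subgroup.zpowers g with hK
  set n := Multiset.card C with hn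
  obtain ⟨LD, hLD⟩ : ∃ l : List G, (l : Multiset G) = D := Quotient.exists_rep D
  have hLDlen : LD.length = p - 1 := by
    rw [← hD, ← hLD]; simp
  obtain ⟨T, hT1, hTprod, hTinj, hTcard⟩ := coset_lemma p hmin K LD
    (fun d hd => hDg d (by rw [← hLD]; exact hd))
  have hTp : p ≤ T.card := by
    have hp2 := hp.two_le
    rw [hLDlen] at hTcard
    omega
  -- the finset version of Π(C) with 1 inserted
  set PF : Finset G := (Set.toFinite (subseqProds C)).toFinset with hPF
  have hPFmem : ∀ x, x ∈ PF ↔ x ∈ subseqProds C := fun x => Set.Finite.mem_toFinset _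
  set XF : Finset G := insert 1 PF with hXF
  have h1PF : (1 : G) ∉ PF := fun h => hC ((hPFmem 1).1 h)
  have hXFcard : n + 1 ≤ XF.card := by
    rw [hXF, Finset.card_insert_of_notMem h1PF]
    have h1 : PF.card = (subseqProds C).ncard := by
      rw [Set.ncard_eq_toFinset_card' ]
      congr 1
      ext x
      simp [hPFmem x]
    have := card_le_ncard_subseqProds C hC
    omega
  have hXFK : ∀ x ∈ XF, x ∈ K := by
    intro x hx
    rcases Finset.mem_insert.1 hx with rfl | hx
    · exact K.one_mem
    · obtain ⟨l, _, hle, hpr⟩ := (hPFmem x).1 hx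
      rw [← hpr]
      exact K.list_prod_mem (fun y hy =>
        hCg y (Multiset.mem_of_le hle (by simpa using hy)))
  -- the big finset
  set F : Finset G := (T.biUnion fun w => XF.image fun x => w * x) \ {1} with hF
  -- F sits inside subseqProds (C + D)
  have hFsub : ∀ y ∈ F, y ∈ subseqProds (C + D) := by
    intro y hy
    rw [hF, Finset.mem_sdiff] at hy
    obtain ⟨hy1, hy2⟩ := hy
    have hyne : y ≠ 1 := by simpa using hy2
    obtain ⟨w, hw, hy3⟩ := Finset.mem_biUnion.1 hy1
    obtain ⟨x, hx, rfl⟩ := Finset.mem_image.1 hy3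
    obtain ⟨lw, hlwle, hlwpr⟩ := hTprod w hw
    have hlwD : (lw : Multiset G) ≤ D := hLD ▸ hlwle
    rcases Finset.mem_insert.1 hx with rfl | hx
    · -- x = 1, so y = w ≠ 1 and its witness list is nonempty
      have hwne : w ≠ 1 := by simpa using hyne
      have hlwne : lw ≠ [] := by
        intro h
        rw [h] at hlwpr
        exact hwne (by simpa using hlwpr.symm)
      exact ⟨lw, hlwne, hlwD.trans (Multiset.le_add_left D C), by simp [hlwpr]⟩
    · obtain ⟨lc, hlcne, hlcle, hlcpr⟩ := (hPFmem x).1 hx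
      refine ⟨lw ++ lc, by simp [hlcne], ?_, by simp [hlwpr, hlcpr]⟩
      have h1 : ((lw ++ lc : List G) : Multiset G) = (lw : Multiset G) + (lc : Multiset G) := by
        simp
      rw [h1]
      calc (lw : Multiset G) + (lc : Multiset G) ≤ D + C := add_le_add hlwD hlcle
        _ = C + D := add_comm _ _
  -- disjointness of the coset pieces
  have hdisj : ∀ w₁ ∈ T, ∀ w₂ ∈ T, w₁ ≠ w₂ →
      Disjoint (XF.image fun x => w₁ * x) (XF.image fun x => w₂ * x) := by
    intro w₁ h₁ w₂ h₂ hne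
    rw [Finset.disjoint_left]
    rintro y hy₁ hy₂
    obtain ⟨x₁, hx₁, he₁⟩ := Finset.mem_image.1 hy₁
    obtain ⟨x₂, hx₂, he₂⟩ := Finset.mem_image.1 hy₂
    apply hne
    apply hTinj h₁ h₂
    rw [QuotientGroup.eq]
    have h := he₁.trans he₂.symm
    have hkey : w₁⁻¹ * w₂ = x₁ * x₂⁻¹ := by
      calc w₁⁻¹ * w₂ = w₁⁻¹ * (w₂ * x₂) * x₂⁻¹ := by group
        _ = w₁⁻¹ * (w₁ * x₁) * x₂⁻¹ := by rw [h]
        _ = x₁ * x₂⁻¹ := by group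
    rw [hkey]
    exact K.mul_mem (hXFK x₁ hx₁) (K.inv_mem (hXFK x₂ hx₂))
  have hbU : p * (n + 1) ≤ (T.biUnion fun w => XF.image fun x => w * x).card := by
    rw [Finset.card_biUnion hdisj]
    have h1 : ∀ w ∈ T, (XF.image fun x => w * x).card = XF.card := by
      intro w _
      exact Finset.card_image_of_injective _ (mul_right_injective w)
    calc p * (n + 1) ≤ T.card * XF.card := Nat.mul_le_mul hTp hXFcard
      _ = ∑ _w ∈ T, XF.card := by rw [Finset.sum_const, smul_eq_mul]
      _ = ∑ w ∈ T, (XF.image fun x => w * x).card := Finset.sum_congr rfl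
          (fun w hw => (h1 w hw).symm)
  have hFcard : p * n ≤ F.card := by
    have h1 : (T.biUnion fun w => XF.image fun x => w * x).card ≤ F.card + 1 := by
      have h0 := Finset.card_le_card_sdiff_add_card
        (s := T.biUnion fun w => XF.image fun x => w * x) (t := ({1} : Finset G))
      rw [Finset.card_singleton] at h0
      rw [← hF] at h0
      exact h0
    have hp1 := hp.pos
    have hmul : p * (n + 1) = p * n + p := by ring
    rw [hmul] at hbU
    set k := p * n
    omega
  calc p * n ≤ F.card := hFcard
    _ = (F : Set G).ncard := (Set.ncard_coe_finset F).symm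
    _ ≤ (subseqProds (C + D)).ncard := Set.ncard_le_ncard (fun y hy => hFsub y hy)
        (Set.toFinite _)
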